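/- For every n ≥ 4, the cycle and path satisfy φ(C_n) ≥ φ(P_{n-1}) + 1, with equality if and only if n = 6. -/

import Mathlib

open SimpleGraph

/-- A dissociation set: a set of vertices inducing a subgraph of maximum degree at most 1,
i.e., every vertex of `S` has at most one neighbour inside `S`. -/
def IsDissoc {V : Type*} (G : SimpleGraph V) (S : Set V) : Prop :=
  ∀ v ∈ S, {u | u ∈ S ∧ G.Adj v u}.Subsingleton

/-- A maximal dissociation set: a dissociation set not properly contained in another one. -/
def IsMaxDissoc {V : Type*} (G : SimpleGraph V) (S : Set V) : Prop :=
  IsDissoc G S ∧ ∀ T : Set V, IsDissoc G T → S ⊆ T → S = T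

/-- `phi G` is the number of maximal dissociation sets of `G`. -/
noncomputable def phi {V : Type*} (G : SimpleGraph V) : ℕ :=
  {S : Set V | IsMaxDissoc G S}.ncard

/-- The number of maximal dissociation sets of `G` not containing `u`. -/
noncomputable def phiNot {V : Type*} (G : SimpleGraph V) (u : V) : ℕ :=
  {S : Set V | IsMaxDissoc G S ∧ u ∉ S}.ncard

/-- The number of maximal dissociation sets `S` of `G` with `u ∈ S` and
`u` of degree 0 in the subgraph induced by `S`. -/
noncomputable def phi0 {V : Type*} (G : SimpleGraph V) (u : V) : ℕ :=
  {S : Set V | IsMaxDissoc G S ∧ u ∈ S ∧ ∀ x ∈ S, ¬ G.Adj u x}.ncard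

/-- The number of maximal dissociation sets `S` of `G` with `u ∈ S` and
`u` of degree 1 in the subgraph induced by `S`. -/
noncomputable def phi1 {V : Type*} (G : SimpleGraph V) (u : V) : ℕ :=
  {S : Set V | IsMaxDissoc G S ∧ u ∈ S ∧ ∃! x, x ∈ S ∧ G.Adj u x}.ncard

/-- A unicyclic graph: a connected graph whose number of edges equals its number of vertices
(equivalently, a connected graph with exactly one cycle). -/
def IsUnicyclic {V : Type*} [Fintype V] (G : SimpleGraph V) : Prop :=
  G.Connected ∧ G.edgeSet.ncard = Fintype.card V

/-- The tree `T(p,q)` (for `q ≤ p`): obtained from the star `K_{1,p}` by subdividing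
exactly `q` of its edges.  The centre is `Sum.inl ()`, the `p` neighbours of the centre are
`Sum.inr (Sum.inl i)`, and for `j < q` the vertex `Sum.inr (Sum.inr j)` is the subdivision
pendant attached to the `j`-th neighbour.  It has `1 + p + q` vertices. -/
def treeT (p q : ℕ) (h : q ≤ p) : SimpleGraph (Unit ⊕ Fin p ⊕ Fin q) :=
  SimpleGraph.fromRel fun a b =>
    (∃ i : Fin p, a = Sum.inl () ∧ b = Sum.inr (Sum.inl i)) ∨
    (∃ j : Fin q, a = Sum.inr (Sum.inl (Fin.castLE h j)) ∧ b = Sum.inr (Sum.inr j))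

/-- The unicyclic graph `U(p,q)` (for `q ≤ p`): obtained by identifying one vertex of the
triangle `K₃` with the centre of `T(p,q)`.  The centre is `Sum.inl ()`, the two other triangle
vertices are `Sum.inr (Sum.inl 0)` and `Sum.inr (Sum.inl 1)`, and the copy of `T(p,q)` sits on
the remaining vertices.  It has `3 + p + q` vertices. -/
def graphU (p q : ℕ) (h : q ≤ p) : SimpleGraph (Unit ⊕ Fin 2 ⊕ Fin p ⊕ Fin q) :=
  SimpleGraph.fromRel fun a b =>
    (a = Sum.inl () ∧ b = Sum.inr (Sum.inl 0)) ∨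
    (a = Sum.inl () ∧ b = Sum.inr (Sum.inl 1)) ∨
    (a = Sum.inr (Sum.inl 0) ∧ b = Sum.inr (Sum.inl 1)) ∨
    (∃ i : Fin p, a = Sum.inl () ∧ b = Sum.inr (Sum.inr (Sum.inl i))) ∨
    (∃ j : Fin q, a = Sum.inr (Sum.inr (Sum.inl (Fin.castLE h j))) ∧
      b = Sum.inr (Sum.inr (Sum.inr j)))

/-- The unicyclic graph obtained from the cycle `C_r` by attaching one pendant vertex
`Sum.inr j` to the cycle vertex `Sum.inl (f j)` for each `j : Fin t`.  For injective `f`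
this is a member of the class `𝒰_{r,t}`. -/
def graphUrtF (r t : ℕ) (f : Fin t → Fin r) : SimpleGraph (Fin r ⊕ Fin t) :=
  SimpleGraph.fromRel fun a b =>
    (∃ i j : Fin r, a = Sum.inl i ∧ b = Sum.inl j ∧ (cycleGraph r).Adj i j) ∨
    (∃ j : Fin t, a = Sum.inl (f j) ∧ b = Sum.inr j)

/-- The canonical member `U_{r,t}` of `𝒰_{r,t}` (for `t ≤ r`): the cycle `C_r` with one
pendant vertex attached to each of its first `t` vertices. -/
def graphUrt (r t : ℕ) (h : t ≤ r) : SimpleGraph (Fin r ⊕ Fin t) :=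
  graphUrtF r t (Fin.castLE h)

/-- A caterpillar: a tree in which deleting all vertices of degree 1 leaves a path. -/
def IsCaterpillar {V : Type*} [Fintype V] (G : SimpleGraph V) : Prop :=
  G.IsTree ∧ ∃ m : ℕ,
    Nonempty ((G.induce {v | 2 ≤ (G.neighborSet v).ncard}) ≃g SimpleGraph.pathGraph m)

/-- The graph `G₁` obtained from `U` by adding `k` new pendant vertices
`v₁ = Sum.inr 0, …, v_k = Sum.inr (k-1)`, each adjacent to `w`. -/
def addPendants {V : Type*} (U : SimpleGraph V) (w : V) (k : ℕ) : SimpleGraph (V ⊕ Fin k) :=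
  SimpleGraph.fromRel fun a b =>
    (∃ x y, a = Sum.inl x ∧ b = Sum.inl y ∧ U.Adj x y) ∨
    (∃ j : Fin k, a = Sum.inl w ∧ b = Sum.inr j)

/-- The graph `G₂ = G₁ - w v_k + v₁ v_k`: obtained from `U` by attaching the pendant vertices
`v₁, …, v_{k-1}` to `w` and the vertex `v_k` to `v₁`. -/
def swapPendant {V : Type*} (U : SimpleGraph V) (w : V) (k : ℕ) : SimpleGraph (V ⊕ Fin k) :=
  SimpleGraph.fromRel fun a b =>
    (∃ x y, a = Sum.inl x ∧ b = Sum.inl y ∧ U.Adj x y) ∨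
    (∃ j : Fin k, j.val < k - 1 ∧ a = Sum.inl w ∧ b = Sum.inr j) ∨
    (∃ j₀ j₁ : Fin k, j₀.val = 0 ∧ j₁.val = k - 1 ∧ a = Sum.inr j₀ ∧ b = Sum.inr j₁)

/-- The graph obtained from `H` by attaching a pendant path of length 2 at `w`:
two new vertices `v = Sum.inr 0` and `u = Sum.inr 1` with edges `w v` and `v u`. -/
def addPath2 {V : Type*} (H : SimpleGraph V) (w : V) : SimpleGraph (V ⊕ Fin 2) :=
  SimpleGraph.fromRel fun a b =>
    (∃ x y, a = Sum.inl x ∧ b = Sum.inl y ∧ H.Adj x y) ∨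
    (a = Sum.inl w ∧ b = Sum.inr 0) ∨
    (a = Sum.inr 0 ∧ b = Sum.inr 1)


/-! ### Auxiliary development -/

section Basic

variable {V : Type*} {G : SimpleGraph V} {S T : Set V}

lemma isDissoc_mono (h : S ⊆ T) (hT : IsDissoc G T) : IsDissoc G S := by
  intro v hv x hx y hy
  exact hT v (h hv) ⟨h hx.1, hx.2⟩ ⟨h hy.1, hy.2⟩

lemma isMaxDissoc_iff :
    IsMaxDissoc G S ↔ IsDissoc G S ∧ ∀ v ∉ S, ¬ IsDissoc G (insert v S) := by
  constructor
  · rintro ⟨hd, hmax⟩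
    refine ⟨hd, fun v hv hins => hv ?_⟩
    have h := hmax _ hins (Set.subset_insert _ _)
    rw [h]; exact Set.mem_insert _ _
  · rintro ⟨hd, h⟩
    refine ⟨hd, fun T hT hST => ?_⟩
    by_contra hne
    obtain ⟨v, hvT, hvS⟩ := Set.exists_of_ssubset (hST.ssubset_of_ne hne)
    exact h v hvS (isDissoc_mono (Set.insert_subset hvT hST) hT)

lemma exists_maxDissoc [Finite V] (hS : IsDissoc G S) :
    ∃ T, S ⊆ T ∧ IsMaxDissoc G T := by
  obtain ⟨T, hT, hmax⟩ := Set.Finite.exists_maximalFor (id : Set V → Set V)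
    {T | IsDissoc G T ∧ S ⊆ T} (Set.toFinite _) ⟨S, hS, subset_rfl⟩
  refine ⟨T, hT.2, hT.1, fun T' hT' hTT' => ?_⟩
  exact hTT'.antisymm (hmax ⟨hT', hT.2.trans hTT'⟩ hTT')

lemma insert_isDissoc (hS : IsDissoc G S) {v : V}
    (h1 : ∀ x ∈ S, ∀ y ∈ S, G.Adj v x → G.Adj v y → x = y)
    (h2 : ∀ x ∈ S, G.Adj v x → ∀ w ∈ S, ¬ G.Adj x w) :
    IsDissoc G (insert v S) := by
  intro u hu x hx y hy
  obtain ⟨hx1, hx2⟩ := hx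
  obtain ⟨hy1, hy2⟩ := hy
  rcases hu with rfl | hu
  · have hx1' : x ∈ S := hx1.resolve_left (fun h => by subst h; exact (G.irrefl hx2))
    have hy1' : y ∈ S := hy1.resolve_left (fun h => by subst h; exact (G.irrefl hy2))
    exact h1 x hx1' y hy1' hx2 hy2
  · rcases hx1 with rfl | hx1
    · rcases hy1 with rfl | hy1
      · rfl
      · exact absurd hy2 (h2 u hu hx2.symm y hy1)
    · rcases hy1 with rfl | hy1
      · exact absurd hx2 (h2 u hu hy2.symm x hx1)
      · exact hS u hu ⟨hx1, hx2⟩ ⟨hy1, hy2⟩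

end Basic

section Count

variable {V : Type*} [Fintype V] [DecidableEq V]

/-- A decidable version of `IsMaxDissoc` on finsets, relative to a decidable relation `r`. -/
def maxDissocF (r : V → V → Prop) [DecidableRel r] (A : Finset V) : Prop :=
  (∀ v ∈ A, ∀ x ∈ A, ∀ y ∈ A, r v x → r v y → x = y) ∧
  ∀ v ∈ Aᶜ, ¬ (∀ w ∈ insert v A, ∀ x ∈ insert v A, ∀ y ∈ insert v A,
      r w x → r w y → x = y)

set_option synthInstance.maxSize 1000 in
set_option synthInstance.maxHeartbeats 1000000 in
instance (r : V → V → Prop) [DecidableRel r] : DecidablePred (maxDissocF r) := by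
  unfold maxDissocF; infer_instance

lemma isDissoc_finset_iff {G : SimpleGraph V} {r : V → V → Prop} [DecidableRel r]
    (hr : ∀ a b, r a b ↔ G.Adj a b) (A : Finset V) :
    (∀ v ∈ A, ∀ x ∈ A, ∀ y ∈ A, r v x → r v y → x = y) ↔ IsDissoc G (A : Set V) := by
  constructor
  · intro h v hv x hx y hy
    exact h v hv x hx.1 y hy.1 ((hr _ _).2 hx.2) ((hr _ _).2 hy.2)
  · intro h v hv x hx y hy rx ry
    exact h v hv ⟨hx, (hr _ _).1 rx⟩ ⟨hy, (hr _ _).1 ry⟩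

lemma maxDissocF_iff {G : SimpleGraph V} {r : V → V → Prop} [DecidableRel r]
    (hr : ∀ a b, r a b ↔ G.Adj a b) (A : Finset V) :
    maxDissocF r A ↔ IsMaxDissoc G (A : Set V) := by
  rw [isMaxDissoc_iff, maxDissocF]
  constructor
  · rintro ⟨h1, h2⟩
    refine ⟨(isDissoc_finset_iff hr A).1 h1, fun v hv hins => ?_⟩
    refine h2 v (by simpa using hv) ?_
    have := (isDissoc_finset_iff hr (insert v A)).2 (by rwa [Finset.coe_insert])
    exact this
  · rintro ⟨h1, h2⟩
    refine ⟨(isDissoc_finset_iff hr A).2 h1, fun v hv hins => ?_⟩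
    refine h2 v (by simpa using hv) ?_
    rw [← Finset.coe_insert]
    exact (isDissoc_finset_iff hr (insert v A)).1 hins

lemma phi_eq_card (G : SimpleGraph V) (r : V → V → Prop) [DecidableRel r]
    (hr : ∀ a b, r a b ↔ G.Adj a b) :
    phi G = (Finset.univ.filter (maxDissocF r)).card := by
  unfold phi
  have h1 : {S : Set V | IsMaxDissoc G S} =
      (fun A : Finset V => (A : Set V)) '' ↑(Finset.univ.filter (maxDissocF r)) := by
    ext S
    simp only [Set.mem_setOf_eq, Set.mem_image, Finset.mem_coe, Finset.mem_filter,
      Finset.mem_univ, true_and]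
    constructor
    · intro hS
      refine ⟨(S.toFinite).toFinset, ?_, (S.toFinite).coe_toFinset⟩
      rw [maxDissocF_iff hr, (S.toFinite).coe_toFinset]; exact hS
    · rintro ⟨A, hA, rfl⟩
      exact (maxDissocF_iff hr A).1 hA
  rw [h1, Set.ncard_image_of_injective _ Finset.coe_injective, Set.ncard_coe_finset]

end Count

section FinArith

lemma fin_sub_val_eq_one {n : ℕ} (hn : 3 ≤ n) (u v : Fin n) :
    (u - v).val = 1 ↔ (u.val = v.val + 1 ∨ (v.val = n - 1 ∧ u.val = 0)) := by
  have hu := u.isLt; have hv := v.isLt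
  rw [Fin.sub_def]
  simp only []
  rcases le_or_gt v.val u.val with h | h
  · have e : (n - v.val) + u.val = n + (u.val - v.val) := by omega
    rw [e, Nat.add_mod_left, Nat.mod_eq_of_lt (by omega)]
    omega
  · have e : (n - v.val) + u.val < n := by omega
    rw [Nat.mod_eq_of_lt e]
    omega

lemma cyc_adj {n : ℕ} (hn : 3 ≤ n) (u v : Fin n) :
    (cycleGraph n).Adj u v ↔ (u.val + 1 = v.val ∨ v.val + 1 = u.val ∨
      (u.val = 0 ∧ v.val = n - 1) ∨ (v.val = 0 ∧ u.val = n - 1)) := by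
  rw [cycleGraph_adj', fin_sub_val_eq_one hn, fin_sub_val_eq_one hn]
  omega

lemma cyc_adj_mk {n : ℕ} (hn : 3 ≤ n) {a b : ℕ} (ha : a < n) (hb : b < n)
    (h : a + 1 = b ∨ b + 1 = a ∨ (a = 0 ∧ b = n - 1) ∨ (b = 0 ∧ a = n - 1)) :
    (cycleGraph n).Adj ⟨a, ha⟩ ⟨b, hb⟩ := (cyc_adj hn _ _).2 h

end FinArith

theorem phi_path3 : phi (SimpleGraph.pathGraph 3) = 3 := by
  rw [phi_eq_card _ (fun a b : Fin 3 => a.val + 1 = b.val ∨ b.val + 1 = a.val)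
    (fun a b => pathGraph_adj.symm)]
  decide

theorem phi_path4 : phi (SimpleGraph.pathGraph 4) = 3 := by
  rw [phi_eq_card _ (fun a b : Fin 4 => a.val + 1 = b.val ∨ b.val + 1 = a.val)
    (fun a b => pathGraph_adj.symm)]
  decide

theorem phi_path5 : phi (SimpleGraph.pathGraph 5) = 4 := by
  rw [phi_eq_card _ (fun a b : Fin 5 => a.val + 1 = b.val ∨ b.val + 1 = a.val)
    (fun a b => pathGraph_adj.symm)]
  decide

theorem phi_cyc4 : phi (cycleGraph 4) = 6 := by
  rw [phi_eq_card _ (fun a b : Fin 4 => (a - b).val = 1 ∨ (b - a).val = 1)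
    (fun a b => cycleGraph_adj'.symm)]
  decide

theorem phi_cyc5 : phi (cycleGraph 5) = 5 := by
  rw [phi_eq_card _ (fun a b : Fin 5 => (a - b).val = 1 ∨ (b - a).val = 1)
    (fun a b => cycleGraph_adj'.symm)]
  decide

theorem phi_cyc6 : phi (cycleGraph 6) = 5 := by
  rw [phi_eq_card _ (fun a b : Fin 6 => (a - b).val = 1 ∨ (b - a).val = 1)
    (fun a b => cycleGraph_adj'.symm)]
  decide

section Main

variable {m : ℕ}

/-- Extend a path maximal dissociation set to the cycle, adding the last vertex if possible. -/
noncomputable def ext1 (m : ℕ) (S : Set (Fin m)) : Set (Fin (m + 1)) :=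
  open Classical in
  if IsDissoc (cycleGraph (m + 1)) (insert (Fin.last m) (Fin.castSucc '' S)) then
    insert (Fin.last m) (Fin.castSucc '' S)
  else Fin.castSucc '' S

lemma adj_cast (hm : 2 ≤ m) (a b : Fin m) :
    (cycleGraph (m + 1)).Adj a.castSucc b.castSucc ↔ (pathGraph m).Adj a b := by
  have ha := a.isLt; have hb := b.isLt
  rw [cyc_adj (by omega), pathGraph_adj]
  simp only [Fin.coe_castSucc]
  omega

lemma dissoc_preimage (hm : 2 ≤ m) {T : Set (Fin (m + 1))}
    (hT : IsDissoc (cycleGraph (m + 1)) T) :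
    IsDissoc (pathGraph m) (Fin.castSucc ⁻¹' T) := by
  intro v hv x hx y hy
  have := hT v.castSucc hv ⟨hx.1, (adj_cast hm v x).2 hx.2⟩ ⟨hy.1, (adj_cast hm v y).2 hy.2⟩
  exact Fin.castSucc_injective m this

lemma dissoc_image (hm : 2 ≤ m) {S : Set (Fin m)}
    (hS : IsDissoc (pathGraph m) S) :
    IsDissoc (cycleGraph (m + 1)) (Fin.castSucc '' S) := by
  rintro v hv x hx y hy
  obtain ⟨a, ha, rfl⟩ := hv
  obtain ⟨⟨b, hb, rfl⟩, hadj⟩ := hx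
  obtain ⟨⟨c, hc, rfl⟩, hadj'⟩ := hy
  have := hS a ha ⟨hb, (adj_cast hm a b).1 hadj⟩ ⟨hc, (adj_cast hm a c).1 hadj'⟩
  rw [this]

lemma dissoc_image_iff (hm : 2 ≤ m) (S : Set (Fin m)) :
    IsDissoc (pathGraph m) S ↔ IsDissoc (cycleGraph (m + 1)) (Fin.castSucc '' S) := by
  refine ⟨dissoc_image hm, fun h => ?_⟩
  have := dissoc_preimage hm h
  rwa [Set.preimage_image_eq S (Fin.castSucc_injective m)] at this

lemma preimage_ext1 (S : Set (Fin m)) : Fin.castSucc ⁻¹' (ext1 m S) = S := by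
  have key : ∀ X : Set (Fin (m+1)), Fin.castSucc ⁻¹' (insert (Fin.last m) X)
      = Fin.castSucc ⁻¹' X := by
    intro X
    ext a
    simp only [Set.mem_preimage, Set.mem_insert_iff, (Fin.castSucc_lt_last a).ne, false_or]
  unfold ext1
  split_ifs with h <;>
    simp [key, Set.preimage_image_eq _ (Fin.castSucc_injective m)]

lemma ext1_isMaxDissoc (hm : 2 ≤ m) {S : Set (Fin m)}
    (hS : IsMaxDissoc (pathGraph m) S) :
    IsMaxDissoc (cycleGraph (m + 1)) (ext1 m S) := by
  have hSd := hS.1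
  rw [isMaxDissoc_iff] at hS ⊢
  unfold ext1
  split_ifs with h
  · refine ⟨h, fun v hv hins => ?_⟩
    rcases Fin.eq_castSucc_or_eq_last v with ⟨a, rfl⟩ | rfl
    · have haS : a ∉ S := fun haS => hv (Set.mem_insert_of_mem _ ⟨a, haS, rfl⟩)
      refine hS.2 a haS ?_
      rw [dissoc_image_iff hm, Set.image_insert_eq]
      refine isDissoc_mono ?_ hins
      intro x hx
      rcases hx with rfl | hx
      · exact Set.mem_insert _ _
      · exact Set.mem_insert_of_mem _ (Set.mem_insert_of_mem _ hx)
    · exact hv (Set.mem_insert _ _)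
  · refine ⟨dissoc_image hm hS.1, fun v hv hins => ?_⟩
    rcases Fin.eq_castSucc_or_eq_last v with ⟨a, rfl⟩ | rfl
    · have haS : a ∉ S := fun haS => hv ⟨a, haS, rfl⟩
      refine hS.2 a haS ?_
      rw [dissoc_image_iff hm, Set.image_insert_eq]
      exact hins
    · exact h hins

lemma key_count (hm : 2 ≤ m) {T₁ T₂ : Set (Fin (m + 1))}
    (h1 : IsMaxDissoc (cycleGraph (m + 1)) T₁)
    (h2 : IsMaxDissoc (cycleGraph (m + 1)) T₂)
    (hne : T₁ ≠ T₂)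
    (hb1 : ¬ IsMaxDissoc (pathGraph m) (Fin.castSucc ⁻¹' T₁))
    (hb2 : ¬ IsMaxDissoc (pathGraph m) (Fin.castSucc ⁻¹' T₂)) :
    phi (pathGraph m) + 2 ≤ phi (cycleGraph (m + 1)) := by
  classical
  set A : Set (Set (Fin (m+1))) := ext1 m '' {S | IsMaxDissoc (pathGraph m) S} with hA
  have hinj : Function.Injective (ext1 m) := by
    intro S S' h
    have := congrArg (fun X => Fin.castSucc ⁻¹' X) h
    simpa only [preimage_ext1] using this
  have hAcard : A.ncard = phi (pathGraph m) := by
    rw [hA, Set.ncard_image_of_injective _ hinj]; rfl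
  have hT1A : T₁ ∉ A := by
    rintro ⟨S, hSmem, rfl⟩
    rw [preimage_ext1] at hb1
    exact hb1 hSmem
  have hT2A : T₂ ∉ A := by
    rintro ⟨S, hSmem, rfl⟩
    rw [preimage_ext1] at hb2
    exact hb2 hSmem
  have hsub : A ∪ {T₁, T₂} ⊆ {T : Set (Fin (m+1)) | IsMaxDissoc (cycleGraph (m+1)) T} := by
    rintro T (⟨S, hSmem, rfl⟩ | hT)
    · exact ext1_isMaxDissoc hm hSmem
    · rcases hT with rfl | rfl
      · exact h1
      · exact h2
  have hdisj : Disjoint A {T₁, T₂} := by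
    rw [Set.disjoint_right]
    rintro T (rfl | rfl) <;> assumption
  have hcalc : (A ∪ {T₁, T₂}).ncard = phi (pathGraph m) + 2 := by
    rw [Set.ncard_union_eq hdisj (Set.toFinite _) (Set.toFinite _), hAcard,
      Set.ncard_pair hne]
  calc phi (pathGraph m) + 2 = (A ∪ {T₁, T₂}).ncard := hcalc.symm
    _ ≤ _ := Set.ncard_le_ncard hsub (Set.toFinite _)

end Main


section Witness

variable {m : ℕ}

lemma mem_pre {T : Set (Fin (m + 1))} {x : Fin m} (hx : x ∈ Fin.castSucc ⁻¹' T)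
    {k : ℕ} (h : k < m + 1) (hk : x.val = k) : (⟨k, h⟩ : Fin (m + 1)) ∈ T := by
  have : Fin.castSucc x = ⟨k, h⟩ := Fin.ext (by simpa using hk)
  rwa [Set.mem_preimage, this] at hx

set_option maxHeartbeats 2000000 in
lemma witness1 (hm : 6 ≤ m) :
    ∃ T : Set (Fin (m + 1)), IsMaxDissoc (cycleGraph (m + 1)) T ∧
      (⟨0, by omega⟩ : Fin (m + 1)) ∈ T ∧
      ¬ IsMaxDissoc (pathGraph m) (Fin.castSucc ⁻¹' T) := by
  have hB : IsDissoc (cycleGraph (m + 1))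
      ({⟨m, by omega⟩, ⟨0, by omega⟩, ⟨3, by omega⟩, ⟨4, by omega⟩} : Set (Fin (m + 1))) := by
    intro v hv x hx y hy
    obtain ⟨hx1, hx2⟩ := hx
    obtain ⟨hy1, hy2⟩ := hy
    rw [cyc_adj (by omega)] at hx2 hy2
    simp only [Set.mem_insert_iff, Set.mem_singleton_iff] at hv hx1 hy1
    have hv' : v.val = m ∨ v.val = 0 ∨ v.val = 3 ∨ v.val = 4 := by
      rcases hv with rfl | rfl | rfl | rfl <;> simp
    have hx1' : x.val = m ∨ x.val = 0 ∨ x.val = 3 ∨ x.val = 4 := by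
      rcases hx1 with rfl | rfl | rfl | rfl <;> simp
    have hy1' : y.val = m ∨ y.val = 0 ∨ y.val = 3 ∨ y.val = 4 := by
      rcases hy1 with rfl | rfl | rfl | rfl <;> simp
    have hxl := x.isLt; have hyl := y.isLt
    clear hv hx1 hy1
    exact Fin.ext (by omega)
  obtain ⟨T, hBT, hT⟩ := exists_maxDissoc hB
  have hTd : IsDissoc (cycleGraph (m + 1)) T := hT.1
  have h0T : (⟨0, by omega⟩ : Fin (m + 1)) ∈ T := hBT (by simp)
  have hmT : (⟨m, by omega⟩ : Fin (m + 1)) ∈ T := hBT (by simp)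
  have h3T : (⟨3, by omega⟩ : Fin (m + 1)) ∈ T := hBT (by simp)
  have h4T : (⟨4, by omega⟩ : Fin (m + 1)) ∈ T := hBT (by simp)
  have h1T : (⟨1, by omega⟩ : Fin (m + 1)) ∉ T := by
    intro h1
    have heq := hTd ⟨0, by omega⟩ h0T
      (x := ⟨m, by omega⟩) ⟨hmT, cyc_adj_mk (by omega) (by omega) (by omega) (by omega)⟩
      (y := ⟨1, by omega⟩) ⟨h1, cyc_adj_mk (by omega) (by omega) (by omega) (by omega)⟩
    simp only [Fin.mk.injEq] at heq
    omega
  have h2T : (⟨2, by omega⟩ : Fin (m + 1)) ∉ T := by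
    intro h2
    have heq := hTd ⟨3, by omega⟩ h3T
      (x := ⟨2, by omega⟩) ⟨h2, cyc_adj_mk (by omega) (by omega) (by omega) (by omega)⟩
      (y := ⟨4, by omega⟩) ⟨h4T, cyc_adj_mk (by omega) (by omega) (by omega) (by omega)⟩
    simp only [Fin.mk.injEq] at heq
    omega
  refine ⟨T, hT, h0T, ?_⟩
  rw [isMaxDissoc_iff]
  rintro ⟨hSd, hSmax⟩
  have hw1 : (⟨1, by omega⟩ : Fin m) ∉ Fin.castSucc ⁻¹' T := by
    intro hmem
    exact h1T (mem_pre hmem (by omega) rfl)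
  refine hSmax ⟨1, by omega⟩ hw1 ?_
  refine insert_isDissoc hSd ?_ ?_
  · intro x hx y hy ax ay
    rw [pathGraph_adj] at ax ay
    simp only [] at ax ay
    have hx0 : x.val = 0 := by
      rcases (by omega : x.val = 2 ∨ x.val = 0) with h | h
      · exact absurd (mem_pre hx (by omega) h) h2T
      · exact h
    have hy0 : y.val = 0 := by
      rcases (by omega : y.val = 2 ∨ y.val = 0) with h | h
      · exact absurd (mem_pre hy (by omega) h) h2T
      · exact h
    exact Fin.ext (by omega)
  · intro x hx ax w hw axw
    rw [pathGraph_adj] at ax axw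
    simp only [] at ax axw
    have hx0 : x.val = 0 := by
      rcases (by omega : x.val = 2 ∨ x.val = 0) with h | h
      · exact absurd (mem_pre hx (by omega) h) h2T
      · exact h
    have : w.val = 1 := by omega
    exact h1T (mem_pre hw (by omega) this)

set_option maxHeartbeats 2000000 in
lemma witness2 (hm : 6 ≤ m) :
    ∃ T : Set (Fin (m + 1)), IsMaxDissoc (cycleGraph (m + 1)) T ∧
      (⟨0, by omega⟩ : Fin (m + 1)) ∉ T ∧
      ¬ IsMaxDissoc (pathGraph m) (Fin.castSucc ⁻¹' T) := by
  have hB : IsDissoc (cycleGraph (m + 1))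
      ({⟨m - 5, by omega⟩, ⟨m - 4, by omega⟩, ⟨m - 1, by omega⟩, ⟨m, by omega⟩} :
        Set (Fin (m + 1))) := by
    intro v hv x hx y hy
    obtain ⟨hx1, hx2⟩ := hx
    obtain ⟨hy1, hy2⟩ := hy
    rw [cyc_adj (by omega)] at hx2 hy2
    simp only [Set.mem_insert_iff, Set.mem_singleton_iff] at hv hx1 hy1
    have hv' : v.val = m - 5 ∨ v.val = m - 4 ∨ v.val = m - 1 ∨ v.val = m := by
      rcases hv with rfl | rfl | rfl | rfl <;> simp
    have hx1' : x.val = m - 5 ∨ x.val = m - 4 ∨ x.val = m - 1 ∨ x.val = m := by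
      rcases hx1 with rfl | rfl | rfl | rfl <;> simp
    have hy1' : y.val = m - 5 ∨ y.val = m - 4 ∨ y.val = m - 1 ∨ y.val = m := by
      rcases hy1 with rfl | rfl | rfl | rfl <;> simp
    have hxl := x.isLt; have hyl := y.isLt
    clear hv hx1 hy1
    exact Fin.ext (by omega)
  obtain ⟨T, hBT, hT⟩ := exists_maxDissoc hB
  have hTd : IsDissoc (cycleGraph (m + 1)) T := hT.1
  have h5T : (⟨m - 5, by omega⟩ : Fin (m + 1)) ∈ T := hBT (by simp)
  have h4T : (⟨m - 4, by omega⟩ : Fin (m + 1)) ∈ T := hBT (by simp)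
  have h1T : (⟨m - 1, by omega⟩ : Fin (m + 1)) ∈ T := hBT (by simp)
  have hmT : (⟨m, by omega⟩ : Fin (m + 1)) ∈ T := hBT (by simp)
  have h0T : (⟨0, by omega⟩ : Fin (m + 1)) ∉ T := by
    intro h0
    have heq := hTd ⟨m, by omega⟩ hmT
      (x := ⟨m - 1, by omega⟩) ⟨h1T, cyc_adj_mk (by omega) (by omega) (by omega) (by omega)⟩
      (y := ⟨0, by omega⟩) ⟨h0, cyc_adj_mk (by omega) (by omega) (by omega) (by omega)⟩
    simp only [Fin.mk.injEq] at heq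
    omega
  have hm2T : (⟨m - 2, by omega⟩ : Fin (m + 1)) ∉ T := by
    intro h2
    have heq := hTd ⟨m - 1, by omega⟩ h1T
      (x := ⟨m, by omega⟩) ⟨hmT, cyc_adj_mk (by omega) (by omega) (by omega) (by omega)⟩
      (y := ⟨m - 2, by omega⟩) ⟨h2, cyc_adj_mk (by omega) (by omega) (by omega) (by omega)⟩
    simp only [Fin.mk.injEq] at heq
    omega
  have hm3T : (⟨m - 3, by omega⟩ : Fin (m + 1)) ∉ T := by
    intro h3
    have heq := hTd ⟨m - 4, by omega⟩ h4T
      (x := ⟨m - 5, by omega⟩) ⟨h5T, cyc_adj_mk (by omega) (by omega) (by omega) (by omega)⟩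
      (y := ⟨m - 3, by omega⟩) ⟨h3, cyc_adj_mk (by omega) (by omega) (by omega) (by omega)⟩
    simp only [Fin.mk.injEq] at heq
    omega
  refine ⟨T, hT, h0T, ?_⟩
  rw [isMaxDissoc_iff]
  rintro ⟨hSd, hSmax⟩
  have hw2 : (⟨m - 2, by omega⟩ : Fin m) ∉ Fin.castSucc ⁻¹' T := by
    intro hmem
    exact hm2T (mem_pre hmem (by omega) rfl)
  refine hSmax ⟨m - 2, by omega⟩ hw2 ?_
  refine insert_isDissoc hSd ?_ ?_
  · intro x hx y hy ax ay
    rw [pathGraph_adj] at ax ay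
    simp only [] at ax ay
    have hx0 : x.val = m - 1 := by
      rcases (by omega : x.val = m - 1 ∨ x.val = m - 3) with h | h
      · exact h
      · exact absurd (mem_pre hx (by omega) h) hm3T
    have hy0 : y.val = m - 1 := by
      rcases (by omega : y.val = m - 1 ∨ y.val = m - 3) with h | h
      · exact h
      · exact absurd (mem_pre hy (by omega) h) hm3T
    exact Fin.ext (by omega)
  · intro x hx ax w hw axw
    rw [pathGraph_adj] at ax axw
    simp only [] at ax axw
    have hx0 : x.val = m - 1 := by
      rcases (by omega : x.val = m - 1 ∨ x.val = m - 3) with h | h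
      · exact h
      · exact absurd (mem_pre hx (by omega) h) hm3T
    have hwl := w.isLt
    have : w.val = m - 2 := by omega
    exact hm2T (mem_pre hw (by omega) this)

lemma big_step (hm : 6 ≤ m) :
    phi (pathGraph m) + 2 ≤ phi (cycleGraph (m + 1)) := by
  obtain ⟨T₁, hT₁, h0T₁, hb₁⟩ := witness1 hm
  obtain ⟨T₂, hT₂, h0T₂, hb₂⟩ := witness2 hm
  exact key_count (by omega) hT₁ hT₂ (fun h => h0T₂ (h ▸ h0T₁)) hb₁ hb₂

end Witness

/-- for `n ≥ 4`, `φ(C_n) ≥ φ(P_{n-1}) + 1`, with equality iff `n = 6`. -/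
theorem stmt11 (n : ℕ) (hn : 4 ≤ n) :
    phi (SimpleGraph.pathGraph (n - 1)) + 1 ≤ phi (cycleGraph n) ∧
      (phi (cycleGraph n) = phi (SimpleGraph.pathGraph (n - 1)) + 1 ↔ n = 6) := by
  rcases (by omega : n = 4 ∨ n = 5 ∨ n = 6 ∨ 7 ≤ n) with rfl | rfl | rfl | h7
  · show phi (SimpleGraph.pathGraph 3) + 1 ≤ phi (cycleGraph 4) ∧
      (phi (cycleGraph 4) = phi (SimpleGraph.pathGraph 3) + 1 ↔ 4 = 6)
    rw [phi_path3, phi_cyc4]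
    omega
  · show phi (SimpleGraph.pathGraph 4) + 1 ≤ phi (cycleGraph 5) ∧
      (phi (cycleGraph 5) = phi (SimpleGraph.pathGraph 4) + 1 ↔ 5 = 6)
    rw [phi_path4, phi_cyc5]
    omega
  · show phi (SimpleGraph.pathGraph 5) + 1 ≤ phi (cycleGraph 6) ∧
      (phi (cycleGraph 6) = phi (SimpleGraph.pathGraph 5) + 1 ↔ 6 = 6)
    rw [phi_path5, phi_cyc6]
    omega
  · obtain ⟨m, rfl⟩ : ∃ m, n = m + 1 := ⟨n - 1, by omega⟩
    have hm : 6 ≤ m := by omega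
    have key := big_step hm
    show phi (SimpleGraph.pathGraph m) + 1 ≤ phi (cycleGraph (m + 1)) ∧
      (phi (cycleGraph (m + 1)) = phi (SimpleGraph.pathGraph m) + 1 ↔ m + 1 = 6)
    omega
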